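/- A 2D spatially-coupled code with component matrices H_{i,j} (Pauli-valued r×n matrices, 0 ≤ i ≤ m₁, 0 ≤ j ≤ m₂) and characteristic function F(U,V) = Σ_{i,j} H_{i,j} U^i V^j satisfies the stabilizer commutativity conditions if and only if the symplectic inner product polynomial ⟨F(U,V), F(U⁻¹,V⁻¹)⟩_s is identically zero (the zero r×r matrix polynomial). -/

import Mathlib

open Matrix Finset

/-- Symplectic inner product of Pauli-symbol matrices (Pauli symbols identified with `F₂²`). -/
def sympMat {r₁ r₂ n : ℕ} (P : Matrix (Fin r₁) (Fin n) (ZMod 2 × ZMod 2))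
    (Q : Matrix (Fin r₂) (Fin n) (ZMod 2 × ZMod 2)) : Matrix (Fin r₁) (Fin r₂) (ZMod 2) :=
  fun i j => ∑ k, ((P i k).1 * (Q j k).2 + (P i k).2 * (Q j k).1)

lemma sympMat_zero_left {r₁ r₂ n : ℕ} (Q : Matrix (Fin r₂) (Fin n) (ZMod 2 × ZMod 2)) :
    sympMat (0 : Matrix (Fin r₁) (Fin n) (ZMod 2 × ZMod 2)) Q = 0 := by
  ext i j; simp [sympMat]

lemma sympMat_zero_right {r₁ r₂ n : ℕ} (P : Matrix (Fin r₁) (Fin n) (ZMod 2 × ZMod 2)) :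
    sympMat P (0 : Matrix (Fin r₂) (Fin n) (ZMod 2 × ZMod 2)) = 0 := by
  ext i j; simp [sympMat]

lemma sympMat_comm {r₁ r₂ n : ℕ} (P : Matrix (Fin r₁) (Fin n) (ZMod 2 × ZMod 2))
    (Q : Matrix (Fin r₂) (Fin n) (ZMod 2 × ZMod 2)) :
    sympMat P Q = (sympMat Q P)ᵀ := by
  ext i j
  simp only [sympMat, Matrix.transpose_apply]
  exact Finset.sum_congr rfl fun k _ => by ring

lemma sum_box {M : Type*} [AddCommMonoid M] (l₁ u₁ l₂ u₂ : ℤ) (f : ℤ → ℤ → M)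
    (hf : ∀ i j, (i < l₁ ∨ u₁ < i ∨ j < l₂ ∨ u₂ < j) → f i j = 0)
    (s t : Finset ℤ) (hs : Icc l₁ u₁ ⊆ s) (ht : Icc l₂ u₂ ⊆ t) :
    ∑ i ∈ s, ∑ j ∈ t, f i j = ∑ i ∈ Icc l₁ u₁, ∑ j ∈ Icc l₂ u₂, f i j := by
  rw [← Finset.sum_subset hs ?h1]
  · exact Finset.sum_congr rfl fun i _ =>
      (Finset.sum_subset ht fun j _ hj => hf i j (by simp [Finset.mem_Icc] at hj; omega)).symm
  case h1 =>
    intro i _ hi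
    exact Finset.sum_eq_zero fun j _ => hf i j (by simp [Finset.mem_Icc] at hi; omega)

lemma shift_sum {M : Type*} [AddCommMonoid M] (c l u : ℤ) (f : ℤ → M) :
    ∑ i ∈ Icc l u, f i = ∑ i ∈ Icc (c + l) (c + u), f (i - c) := by
  rw [← Finset.map_add_left_Icc, Finset.sum_map]
  exact Finset.sum_congr rfl fun x _ => by simp [addLeftEmbedding]

lemma sum_Icc_int {M : Type*} [AddCommMonoid M] (k : ℕ) (f : ℤ → M) :
    ∑ i ∈ Icc (0:ℤ) (k:ℤ), f i = ∑ i ∈ range (k+1), f (i:ℤ) := by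
  have h : Icc (0:ℤ) (k:ℤ) =
      (range (k+1)).map ⟨((↑) : ℕ → ℤ), fun a b h => by exact_mod_cast h⟩ := by
    ext x
    simp only [Finset.mem_map, Finset.mem_range, Finset.mem_Icc, Function.Embedding.coeFn_mk]
    constructor
    · rintro ⟨h0, hk⟩; exact ⟨x.toNat, by omega, by change ((x.toNat : ℕ) : ℤ) = x; omega⟩
    · rintro ⟨a, ha, rfl⟩; change (0:ℤ) ≤ (a:ℤ) ∧ (a:ℤ) ≤ (k:ℤ); omega
  rw [h, Finset.sum_map]; rfl

/-- Theorem 2: a 2D-SC code with component matrices `H i j` (supported on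
`0 ≤ i ≤ m₁`, `0 ≤ j ≤ m₂`, these being the coefficients of the characteristic
function `F(U,V) = Σ H_{i,j}U^iV^j`) satisfies the stabilizer commutativity
conditions iff every coefficient of `⟨F(U,V), F(U⁻¹,V⁻¹)⟩_s` vanishes. -/
theorem characteristic_function_condition (m₁ m₂ r n : ℕ)
    (H : ℤ → ℤ → Matrix (Fin r) (Fin n) (ZMod 2 × ZMod 2))
    (hsupp : ∀ i j : ℤ, (i < 0 ∨ (m₁ : ℤ) < i ∨ j < 0 ∨ (m₂ : ℤ) < j) → H i j = 0) :
    (∀ d₁ d₂ : ℤ,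
      ∑ i ∈ Finset.Icc (0 : ℤ) (m₁ : ℤ), ∑ j ∈ Finset.Icc (0 : ℤ) (m₂ : ℤ),
        sympMat (H i j) (H (i + d₁) (j + d₂)) = 0)
    ↔ (∀ d₁ d₂ : ℕ, d₁ ≤ m₁ → d₂ ≤ m₂ →
        (∑ i ∈ Finset.range (m₁ - d₁ + 1), ∑ j ∈ Finset.range (m₂ - d₂ + 1),
          sympMat (H (i : ℤ) (j : ℤ)) (H ((i : ℤ) + (d₁ : ℤ)) ((j : ℤ) + (d₂ : ℤ))) = 0) ∧
        (∑ i ∈ Finset.range (m₁ - d₁ + 1), ∑ j ∈ Finset.range (m₂ - d₂ + 1),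
          sympMat (H ((i : ℤ) + (d₁ : ℤ)) (j : ℤ)) (H (i : ℤ) ((j : ℤ) + (d₂ : ℤ))) = 0)) := by
  set S : ℤ → ℤ → Matrix (Fin r) (Fin r) (ZMod 2) := fun d₁ d₂ =>
    ∑ i ∈ Finset.Icc (0 : ℤ) (m₁ : ℤ), ∑ j ∈ Finset.Icc (0 : ℤ) (m₂ : ℤ),
      sympMat (H i j) (H (i + d₁) (j + d₂)) with hS
  have hz : ∀ (P : Matrix (Fin r) (Fin n) (ZMod 2 × ZMod 2)) (i j : ℤ),
      (i < 0 ∨ (m₁ : ℤ) < i ∨ j < 0 ∨ (m₂ : ℤ) < j) → sympMat P (H i j) = 0 := by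
    intro P i j h; rw [hsupp i j h, sympMat_zero_right]
  have hz' : ∀ (P : Matrix (Fin r) (Fin n) (ZMod 2 × ZMod 2)) (i j : ℤ),
      (i < 0 ∨ (m₁ : ℤ) < i ∨ j < 0 ∨ (m₂ : ℤ) < j) → sympMat (H i j) P = 0 := by
    intro P i j h; rw [hsupp i j h, sympMat_zero_left]
  -- (A) the first commutativity sum
  have hA : ∀ d₁ d₂ : ℕ, d₁ ≤ m₁ → d₂ ≤ m₂ → S d₁ d₂ =
      ∑ i ∈ Finset.range (m₁ - d₁ + 1), ∑ j ∈ Finset.range (m₂ - d₂ + 1),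
        sympMat (H (i : ℤ) (j : ℤ)) (H ((i : ℤ) + (d₁ : ℤ)) ((j : ℤ) + (d₂ : ℤ))) := by
    intro d₁ d₂ h1 h2
    show (∑ i ∈ Finset.Icc (0 : ℤ) (m₁ : ℤ), ∑ j ∈ Finset.Icc (0 : ℤ) (m₂ : ℤ),
        sympMat (H i j) (H (i + (d₁:ℤ)) (j + (d₂:ℤ)))) = _
    rw [sum_box 0 ((m₁ - d₁ : ℕ) : ℤ) 0 ((m₂ - d₂ : ℕ) : ℤ)
      (fun i j => sympMat (H i j) (H (i + (d₁:ℤ)) (j + (d₂:ℤ)))) ?hv _ _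
      (Finset.Icc_subset_Icc le_rfl (by push_cast; omega))
      (Finset.Icc_subset_Icc le_rfl (by push_cast; omega))]
    · rw [sum_Icc_int]
      exact Finset.sum_congr rfl fun i _ => by rw [sum_Icc_int]
    case hv =>
      intro i j h
      rcases h with h | h | h | h
      · exact hz' _ i j (Or.inl h)
      · exact hz _ (i + d₁) (j + d₂) (Or.inr (Or.inl (by push_cast at h ⊢; omega)))
      · exact hz' _ i j (Or.inr (Or.inr (Or.inl h)))
      · exact hz _ (i + d₁) (j + d₂) (Or.inr (Or.inr (Or.inr (by push_cast at h ⊢; omega))))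
  -- (B) the second commutativity sum
  have hB : ∀ d₁ d₂ : ℕ, d₁ ≤ m₁ → d₂ ≤ m₂ → S (-(d₁:ℤ)) d₂ =
      ∑ i ∈ Finset.range (m₁ - d₁ + 1), ∑ j ∈ Finset.range (m₂ - d₂ + 1),
        sympMat (H ((i : ℤ) + (d₁ : ℤ)) (j : ℤ)) (H (i : ℤ) ((j : ℤ) + (d₂ : ℤ))) := by
    intro d₁ d₂ h1 h2
    show (∑ i ∈ Finset.Icc (0 : ℤ) (m₁ : ℤ), ∑ j ∈ Finset.Icc (0 : ℤ) (m₂ : ℤ),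
        sympMat (H i j) (H (i + -(d₁:ℤ)) (j + (d₂:ℤ)))) = _
    rw [sum_box (d₁ : ℤ) (m₁ : ℤ) 0 ((m₂ - d₂ : ℕ) : ℤ)
      (fun i j => sympMat (H i j) (H (i + -(d₁:ℤ)) (j + (d₂:ℤ)))) ?hv _ _
      (Finset.Icc_subset_Icc (by positivity) le_rfl)
      (Finset.Icc_subset_Icc le_rfl (by push_cast; omega))]
    · rw [shift_sum (-(d₁:ℤ)) (d₁:ℤ) (m₁:ℤ)]
      have hb : Finset.Icc (-(d₁:ℤ) + (d₁:ℤ)) (-(d₁:ℤ) + (m₁:ℤ)) =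
          Finset.Icc (0:ℤ) ((m₁ - d₁ : ℕ) : ℤ) := by
        congr 1 <;> push_cast <;> omega
      rw [hb, sum_Icc_int]
      refine Finset.sum_congr rfl fun i _ => ?_
      rw [sum_Icc_int]
      refine Finset.sum_congr rfl fun j _ => ?_
      have e2 : (i:ℤ) - -(d₁:ℤ) + -(d₁:ℤ) = (i:ℤ) := by omega
      have e1 : (i:ℤ) - -(d₁:ℤ) = (i:ℤ) + (d₁:ℤ) := by omega
      rw [e2, e1]
    case hv =>
      intro i j h
      rcases h with h | h | h | h
      · exact hz _ (i + -(d₁:ℤ)) (j + d₂) (Or.inl (by omega))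
      · exact hz' _ i j (Or.inr (Or.inl h))
      · exact hz' _ i j (Or.inr (Or.inr (Or.inl h)))
      · exact hz _ (i + -(d₁:ℤ)) (j + d₂) (Or.inr (Or.inr (Or.inr (by push_cast at h ⊢; omega))))
  -- (Z) out-of-range shifts give zero
  have hZ : ∀ a b : ℤ, ((m₁:ℤ) < a ∨ a < -(m₁:ℤ) ∨ (m₂:ℤ) < b ∨ b < -(m₂:ℤ)) →
      S a b = 0 := by
    intro a b h
    show (∑ i ∈ Finset.Icc (0 : ℤ) (m₁ : ℤ), ∑ j ∈ Finset.Icc (0 : ℤ) (m₂ : ℤ),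
        sympMat (H i j) (H (i + a) (j + b))) = 0
    refine Finset.sum_eq_zero fun i hi => Finset.sum_eq_zero fun j hj => ?_
    simp only [Finset.mem_Icc] at hi hj
    exact hz _ (i + a) (j + b) (by omega)
  -- (C) symmetry under negating the shift
  have hC : ∀ a b : ℤ, S a b = (S (-a) (-b))ᵀ := by
    intro a b
    have key : S a b = ∑ i ∈ Finset.Icc (0 : ℤ) (m₁ : ℤ), ∑ j ∈ Finset.Icc (0 : ℤ) (m₂ : ℤ),
        sympMat (H (i - a) (j - b)) (H i j) := by
      show (∑ i ∈ Finset.Icc (0 : ℤ) (m₁ : ℤ), ∑ j ∈ Finset.Icc (0 : ℤ) (m₂ : ℤ),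
          sympMat (H i j) (H (i + a) (j + b))) = _
      rw [sum_box (max 0 (-a)) (min (m₁:ℤ) ((m₁:ℤ) - a)) (max 0 (-b)) (min (m₂:ℤ) ((m₂:ℤ) - b))
        (fun i j => sympMat (H i j) (H (i + a) (j + b))) ?hv _ _
        (Finset.Icc_subset_Icc (le_max_left _ _) (min_le_left _ _))
        (Finset.Icc_subset_Icc (le_max_left _ _) (min_le_left _ _))]
      · rw [shift_sum a (max 0 (-a)) (min (m₁:ℤ) ((m₁:ℤ) - a))]
        have step : ∀ i : ℤ, (∑ j ∈ Finset.Icc (max 0 (-b)) (min (m₂:ℤ) ((m₂:ℤ) - b)),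
            sympMat (H (i - a) j) (H (i - a + a) (j + b))) =
            ∑ j ∈ Finset.Icc (b + max 0 (-b)) (b + min (m₂:ℤ) ((m₂:ℤ) - b)),
              sympMat (H (i - a) (j - b)) (H i j) := by
          intro i
          rw [shift_sum b (max 0 (-b)) (min (m₂:ℤ) ((m₂:ℤ) - b))]
          refine Finset.sum_congr rfl fun j _ => ?_
          have e1 : i - a + a = i := by omega
          have e2 : j - b + b = j := by omega
          rw [e1, e2]
        rw [Finset.sum_congr rfl fun i _ => step i]
        refine (sum_box (a + max 0 (-a)) (a + min (m₁:ℤ) ((m₁:ℤ) - a))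
          (b + max 0 (-b)) (b + min (m₂:ℤ) ((m₂:ℤ) - b))
          (fun i j => sympMat (H (i - a) (j - b)) (H i j)) ?hg _ _
          ?hs1 ?hs2).symm
        case hg =>
          intro i j h
          rcases h with h | h | h | h
          · rcases (by omega : i - a < 0 ∨ i < 0) with h' | h'
            · exact hz' _ (i - a) (j - b) (Or.inl h')
            · exact hz _ i j (Or.inl h')
          · rcases (by omega : (m₁:ℤ) < i - a ∨ (m₁:ℤ) < i) with h' | h'
            · exact hz' _ (i - a) (j - b) (Or.inr (Or.inl h'))
            · exact hz _ i j (Or.inr (Or.inl h'))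
          · rcases (by omega : j - b < 0 ∨ j < 0) with h' | h'
            · exact hz' _ (i - a) (j - b) (Or.inr (Or.inr (Or.inl h')))
            · exact hz _ i j (Or.inr (Or.inr (Or.inl h')))
          · rcases (by omega : (m₂:ℤ) < j - b ∨ (m₂:ℤ) < j) with h' | h'
            · exact hz' _ (i - a) (j - b) (Or.inr (Or.inr (Or.inr h')))
            · exact hz _ i j (Or.inr (Or.inr (Or.inr h')))
        case hs1 =>
          intro x hx; simp only [Finset.mem_Icc] at hx ⊢
          constructor <;> [skip; skip] <;>
            · have := le_max_left (0:ℤ) (-a); have := min_le_left (m₁:ℤ) ((m₁:ℤ) - a); omega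
        case hs2 =>
          intro x hx; simp only [Finset.mem_Icc] at hx ⊢
          constructor <;> [skip; skip] <;>
            · have := le_max_left (0:ℤ) (-b); have := min_le_left (m₂:ℤ) ((m₂:ℤ) - b); omega
      case hv =>
        intro i j h
        rcases h with h | h | h | h
        · rcases (by omega : i < 0 ∨ i + a < 0) with h' | h'
          · exact hz' _ i j (Or.inl h')
          · exact hz _ (i + a) (j + b) (Or.inl h')
        · rcases (by omega : (m₁:ℤ) < i ∨ (m₁:ℤ) < i + a) with h' | h'
          · exact hz' _ i j (Or.inr (Or.inl h'))
          · exact hz _ (i + a) (j + b) (Or.inr (Or.inl h'))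
        · rcases (by omega : j < 0 ∨ j + b < 0) with h' | h'
          · exact hz' _ i j (Or.inr (Or.inr (Or.inl h')))
          · exact hz _ (i + a) (j + b) (Or.inr (Or.inr (Or.inl h')))
        · rcases (by omega : (m₂:ℤ) < j ∨ (m₂:ℤ) < j + b) with h' | h'
          · exact hz' _ i j (Or.inr (Or.inr (Or.inr h')))
          · exact hz _ (i + a) (j + b) (Or.inr (Or.inr (Or.inr h')))
    rw [key]
    show _ = (∑ i ∈ Finset.Icc (0 : ℤ) (m₁ : ℤ), ∑ j ∈ Finset.Icc (0 : ℤ) (m₂ : ℤ),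
        sympMat (H i j) (H (i + -a) (j + -b)))ᵀ
    rw [Matrix.transpose_sum]
    refine Finset.sum_congr rfl fun i _ => ?_
    rw [Matrix.transpose_sum]
    refine Finset.sum_congr rfl fun j _ => ?_
    rw [← sympMat_comm]
    have e1 : i + -a = i - a := by omega
    have e2 : j + -b = j - b := by omega
    rw [e1, e2]
  constructor
  · intro h d₁ d₂ h1 h2
    exact ⟨by rw [← hA d₁ d₂ h1 h2]; exact h _ _, by rw [← hB d₁ d₂ h1 h2]; exact h _ _⟩
  · intro h
    have main : ∀ a b : ℤ, 0 ≤ b → S a b = 0 := by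
      intro a b hb
      rcases le_or_gt 0 a with ha | ha
      · by_cases hle : a ≤ (m₁:ℤ) ∧ b ≤ (m₂:ℤ)
        · obtain ⟨a', rfl⟩ := Int.eq_ofNat_of_zero_le ha
          obtain ⟨b', rfl⟩ := Int.eq_ofNat_of_zero_le hb
          rw [hA a' b' (by exact_mod_cast hle.1) (by exact_mod_cast hle.2)]
          exact (h a' b' (by exact_mod_cast hle.1) (by exact_mod_cast hle.2)).1
        · exact hZ a b (by omega)
      · by_cases hle : -a ≤ (m₁:ℤ) ∧ b ≤ (m₂:ℤ)
        · obtain ⟨a', ha'⟩ := Int.eq_ofNat_of_zero_le (by omega : (0:ℤ) ≤ -a)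
          obtain ⟨b', rfl⟩ := Int.eq_ofNat_of_zero_le hb
          have h1' : a' ≤ m₁ := by omega
          have h2' : b' ≤ m₂ := by exact_mod_cast hle.2
          have : a = -(a':ℤ) := by omega
          rw [this, hB a' b' h1' h2']
          exact (h a' b' h1' h2').2
        · exact hZ a b (by omega)
    intro a b
    rcases le_or_gt 0 b with hb | hb
    · exact main a b hb
    · show S a b = 0
      rw [hC a b, main (-a) (-b) (by omega), Matrix.transpose_zero]
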